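/- Under the standard normal distribution P0 (mean 0, variance 1), for any ε > 0, the integral ∫_ε^∞ f0(y) · 1/(2·F0(ε²/y − y)) dy diverges to +∞, where f0 and F0 are the standard normal density and CDF and the choice g0(y) = ε²/y is made. In particular, the expected post-hoc loss E_{P0}[B(Y)·1{Y ≥ ε}] with B(y) = 1/(2F0(−y + ε²/y)) is infinite. -/

import Mathlib

open MeasureTheory Real Set Filter

noncomputable def gphi : ℝ → ℝ := fun y => (Real.sqrt (2*π))⁻¹ * Real.exp (-(y^2)/2)

lemma gphi_pos (t : ℝ) : 0 < gphi t := by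
  unfold gphi
  positivity

lemma gphi_integrable : Integrable gphi := by
  have h := (integrable_exp_neg_mul_sq (by norm_num : (0:ℝ) < 1/2)).const_mul
    ((Real.sqrt (2*π))⁻¹)
  refine h.congr (Filter.EventuallyEq.of_eq (funext fun t => ?_))
  unfold gphi
  rw [show -(1/2 : ℝ) * t^2 = -(t^2)/2 by ring]

lemma gphi_mul_integrable : Integrable (fun t : ℝ => t * gphi t) := by
  have h := (integrable_mul_exp_neg_mul_sq (by norm_num : (0:ℝ) < 1/2)).const_mul
    ((Real.sqrt (2*π))⁻¹)
  refine h.congr (Filter.EventuallyEq.of_eq (funext fun t => ?_))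
  unfold gphi
  rw [show -(1/2 : ℝ) * t^2 = -(t^2)/2 by ring]; ring

lemma gphi_hasDerivAt (t : ℝ) : HasDerivAt gphi (-t * gphi t) t := by
  have h1 : HasDerivAt (fun t : ℝ => -(t^2)/2) (-t) t := by
    have := ((hasDerivAt_pow 2 t).neg.div_const 2)
    exact this.congr_deriv (by rw [show (2:ℕ) - 1 = 1 from rfl]; ring)
  have h2 := (h1.exp).const_mul ((Real.sqrt (2*π))⁻¹)
  unfold gphi
  exact h2.congr_deriv (by ring)

lemma gphi_tendsto : Tendsto gphi atBot (nhds 0) := by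
  have h2 : Tendsto (fun t : ℝ => t^2) atBot atTop := by
    have := (tendsto_pow_atTop (α := ℝ) two_ne_zero).comp tendsto_neg_atBot_atTop
    refine this.congr fun t => ?_
    simp [sq]
  have h1 : Tendsto (fun t : ℝ => -(t^2)/2) atBot atBot :=
    (tendsto_neg_atTop_atBot.comp h2).atBot_div_const two_pos
  have := (Real.tendsto_exp_atBot.comp h1).const_mul ((Real.sqrt (2*π))⁻¹)
  unfold gphi
  simpa using this

lemma gPhi_pos (x : ℝ) : 0 < ∫ t in Set.Iic x, gphi t := by
  rw [setIntegral_pos_iff_support_of_nonneg_ae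
    (Filter.Eventually.of_forall fun t => (gphi_pos t).le) gphi_integrable.integrableOn]
  have hs : Function.support gphi ∩ Set.Iic x = Set.Iic x := by
    refine Set.inter_eq_right.mpr fun t _ => (gphi_pos t).ne'
  rw [hs]
  simp

/-- Gaussian tail bound: `Φ(-c) ≤ φ(c)/c` for `c > 0`. -/
lemma gPhi_tail {c : ℝ} (hc : 0 < c) : (∫ t in Set.Iic (-c), gphi t) ≤ gphi c / c := by
  have hint : ∫ t in Set.Iic (-c), (-t * gphi t) = gphi (-c) := by
    have := integral_Iic_of_hasDerivAt_of_tendsto'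
      (f := gphi) (f' := fun t => -t * gphi t) (a := -c)
      (fun x _ => gphi_hasDerivAt x)
      ((gphi_mul_integrable.neg.congr
        (Filter.EventuallyEq.of_eq (funext fun t => by
          simp only [Pi.neg_apply]; ring))).integrableOn)
      gphi_tendsto
    simpa using this
  have hmono : (∫ t in Set.Iic (-c), gphi t) ≤ ∫ t in Set.Iic (-c), (1/c) * (-t * gphi t) := by
    refine setIntegral_mono_on gphi_integrable.integrableOn
      (((gphi_mul_integrable.neg.congr
        (Filter.EventuallyEq.of_eq (funext fun t => by
          simp only [Pi.neg_apply]; ring))).const_mul (1/c)).integrableOn)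
      measurableSet_Iic fun t ht => ?_
    have h1 : 1 ≤ (1/c) * (-t) := by
      rw [one_div, inv_mul_eq_div, le_div_iff₀ hc]
      simp only [Set.mem_Iic] at ht
      linarith
    calc gphi t = 1 * gphi t := by ring
      _ ≤ ((1/c) * (-t)) * gphi t := by
          exact mul_le_mul_of_nonneg_right h1 (gphi_pos t).le
      _ = (1/c) * (-t * gphi t) := by ring
  rw [integral_const_mul, hint] at hmono
  have hpe : gphi (-c) = gphi c := by unfold gphi; rw [neg_sq]
  rw [hpe] at hmono
  rwa [one_div, inv_mul_eq_div] at hmono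

/-- The key pointwise lower bound on the integrand. -/
lemma gphi_key (ε : ℝ) (hε : 0 < ε) {y : ℝ} (hy : ε + 1 < y) :
    Real.exp (-ε^2) / 2 ≤ gphi y / (2 * (∫ t in Set.Iic (ε^2/y - y), gphi t)) := by
  have hy0 : 0 < y := by linarith
  set c : ℝ := y - ε^2/y with hcdef
  have hc1 : 1 ≤ c := by
    have h1 : ε^2/y ≤ ε := by
      rw [div_le_iff₀ hy0]
      nlinarith
    simp only [hcdef]; linarith
  have hc0 : 0 < c := by linarith
  have harg : ε^2/y - y = -c := by rw [hcdef]; ring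
  rw [harg]
  have htail := gPhi_tail hc0
  have hPpos := gPhi_pos (-c)
  -- ratio of densities
  have hE : gphi y = gphi c * Real.exp ((c^2 - y^2)/2) := by
    unfold gphi
    rw [mul_assoc, ← Real.exp_add]
    ring_nf
  have hEge : Real.exp (-ε^2) ≤ Real.exp ((c^2 - y^2)/2) := by
    apply Real.exp_le_exp.mpr
    have : c^2 - y^2 = -2*ε^2 + (ε^2/y)^2 := by
      rw [hcdef]; field_simp
      ring
    rw [this]
    nlinarith [sq_nonneg (ε^2/y)]
  -- chain the bounds
  have h1 : gphi y / (2 * (gphi c / c)) ≤ gphi y / (2 * (∫ t in Set.Iic (-c), gphi t)) := by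
    apply div_le_div_of_nonneg_left (gphi_pos y).le (by linarith) (by linarith)
  refine le_trans ?_ h1
  have hφc := gphi_pos c
  have heq : gphi y / (2 * (gphi c / c)) = c * Real.exp ((c^2 - y^2)/2) / 2 := by
    rw [hE]
    field_simp
  rw [heq]
  have hEpos : 0 < Real.exp ((c^2 - y^2)/2) := Real.exp_pos _
  have hmm : Real.exp (-ε^2) * 1 ≤ Real.exp ((c^2 - y^2)/2) * c :=
    mul_le_mul hEge hc1 zero_le_one hEpos.le
  linarith

lemma gphi_lintegral_const_top (k : ℝ) (hk : 0 < k) (a : ℝ) :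
    (∫⁻ _ in Set.Ioi a, ENNReal.ofReal k) = ⊤ := by
  rw [setLIntegral_const, Real.volume_Ioi, ENNReal.mul_top]
  simp [ENNReal.ofReal_eq_zero]
  linarith

/-- Under the standard normal P0, with g0(y) = ε²/y and
B(y) = 1/(2·F0(ε²/y − y)), the integral ∫_ε^∞ f0(y)/(2F0(ε²/y − y)) dy diverges; in
particular the expected post-hoc loss E_{P0}[B(Y)·1{Y ≥ ε}] is infinite. -/
theorem posthoc_loss_infinite (ε : ℝ) (hε : 0 < ε)
    (f0 : ℝ → ℝ) (hf0 : f0 = fun y => (Real.sqrt (2*π))⁻¹ * Real.exp (-(y^2)/2))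
    (F0 : ℝ → ℝ) (hF0 : F0 = fun x => ∫ t in Set.Iic x, f0 t)
    (P0 : Measure ℝ)
    (hP0 : P0 = volume.withDensity (fun y => ENNReal.ofReal (f0 y)))
    (B : ℝ → ℝ) (hB : B = fun y => 1 / (2 * F0 (ε^2/y - y))) :
    (∫⁻ y in Set.Ioi ε, ENNReal.ofReal (f0 y / (2 * F0 (ε^2/y - y)))) = ⊤ ∧
    (∫⁻ y, ENNReal.ofReal (B y) * (Set.Ici ε).indicator (fun _ => (1:ENNReal)) y ∂P0)
      = ⊤ := by
  have hfφ : f0 = gphi := by rw [hf0]; rfl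
  subst hfφ hF0 hP0 hB
  set k : ℝ := Real.exp (-ε^2) / 2 with hkdef
  have hk : 0 < k := by positivity
  have hkey : ∀ y ∈ Set.Ioi (ε + 1), ENNReal.ofReal k ≤
      ENNReal.ofReal (gphi y / (2 * ∫ t in Set.Iic (ε^2/y - y), gphi t)) := fun y hy =>
    ENNReal.ofReal_le_ofReal (gphi_key ε hε hy)
  constructor
  · refine top_le_iff.mp ?_
    calc (⊤ : ENNReal) = ∫⁻ _ in Set.Ioi (ε+1), ENNReal.ofReal k :=
          (gphi_lintegral_const_top k hk (ε+1)).symm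
      _ ≤ ∫⁻ y in Set.Ioi (ε+1),
            ENNReal.ofReal (gphi y / (2 * ∫ t in Set.Iic (ε^2/y - y), gphi t)) :=
          setLIntegral_mono' measurableSet_Ioi hkey
      _ ≤ _ := lintegral_mono_set (Set.Ioi_subset_Ioi (by linarith))
  · have hmeas : Measurable fun y => ENNReal.ofReal (gphi y) := by
      apply ENNReal.measurable_ofReal.comp
      unfold gphi
      fun_prop
    rw [lintegral_withDensity_eq_lintegral_mul_non_measurable volume hmeas
      (Filter.Eventually.of_forall fun x => ENNReal.ofReal_lt_top)]
    refine top_le_iff.mp ?_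
    calc (⊤ : ENNReal) = ∫⁻ _ in Set.Ioi (ε+1), ENNReal.ofReal k :=
          (gphi_lintegral_const_top k hk (ε+1)).symm
      _ ≤ ∫⁻ y in Set.Ioi (ε+1),
            (fun y => ENNReal.ofReal (gphi y) *
              (ENNReal.ofReal ((fun y => 1 / (2 * ∫ t in Set.Iic (ε^2/y - y), gphi t)) y) *
                (Set.Ici ε).indicator (fun _ => (1:ENNReal)) y)) y := by
          refine setLIntegral_mono' measurableSet_Ioi fun y hy => ?_
          simp only [Set.mem_Ioi] at hy
          have hind : (Set.Ici ε).indicator (fun _ => (1:ENNReal)) y = 1 :=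
            Set.indicator_of_mem (by simp only [Set.mem_Ici]; linarith) _
          rw [hind, mul_one, ← ENNReal.ofReal_mul (gphi_pos y).le]
          have : gphi y * (1 / (2 * ∫ t in Set.Iic (ε^2/y - y), gphi t))
              = gphi y / (2 * ∫ t in Set.Iic (ε^2/y - y), gphi t) := by ring
          rw [this]
          exact hkey y hy
      _ ≤ _ := setLIntegral_le_lintegral _ _
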